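/- For any balanced lattice design X ∈ U(n, q^s) with s ≥ 2: Ave(χ²)(X) = (2/(s(s−1))) ∑_{1 ≤ i < k ≤ n} β(x_i, x_k)² + a, where a = (q² n s + n²(1 − s − q))/(q²(s−1)). -/

import Mathlib

open Finset

/-- The coincidence number β(x, w) = #{j : x_j = w_j} of two lattice points. -/
def coincidence {s q : ℕ} (x w : Fin s → Fin q) : ℕ :=
  (univ.filter fun j => x j = w j).card

/-- A design `X ∈ U(n, q^s)` is balanced: `q ∣ n` and every level occurs exactly
`n / q` times in each column. -/
def IsBalanced {n s q : ℕ} (X : Fin n → Fin s → Fin q) : Prop :=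
  q ∣ n ∧ ∀ (j : Fin s) (ℓ : Fin q),
    (univ.filter fun i => X i j = ℓ).card = n / q

/-- The index set of pairs 1 ≤ i < k ≤ n. -/
def pairs (n : ℕ) : Finset (Fin n × Fin n) := univ.filter fun p => p.1 < p.2

/-- The nonorthogonality criterion
Ave(χ²)(X) = (2/(s(s−1))) ∑_{j<l} ∑_{τ₁,τ₂} (N^{(j,l)}_{τ₁,τ₂} − n/q²)². -/
noncomputable def aveChiSq {n s q : ℕ} (X : Fin n → Fin s → Fin q) : ℝ :=
  2 / ((s : ℝ) * ((s : ℝ) - 1)) *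
    ∑ p ∈ pairs s, ∑ τ : Fin q × Fin q,
      (((univ.filter fun i => X i p.1 = τ.1 ∧ X i p.2 = τ.2).card : ℝ)
        - (n : ℝ) / (q : ℝ) ^ 2) ^ 2

lemma ind_card {ι : Type*} [Fintype ι] (P : ι → Prop) [DecidablePred P] :
    ((univ.filter P).card : ℝ) = ∑ i, if P i then (1:ℝ) else 0 := by
  simp [Finset.sum_boole]

lemma card_sq {ι : Type*} [Fintype ι] (P : ι → Prop) [DecidablePred P] :
    ((univ.filter P).card : ℝ)^2 = ∑ p : ι × ι, if P p.1 ∧ P p.2 then (1:ℝ) else 0 := by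
  rw [ind_card, sq, Finset.sum_mul_sum]
  conv_rhs => rw [Fintype.sum_prod_type]
  refine Finset.sum_congr rfl fun i _ => Finset.sum_congr rfl fun k _ => ?_
  by_cases h1 : P i <;> by_cases h2 : P k <;> simp [h1, h2]

lemma sum_split {ι : Type*} [Fintype ι] [LinearOrder ι] (f : ι × ι → ℝ)
    (hf : ∀ i k, f (i, k) = f (k, i)) :
    ∑ p : ι × ι, f p = (∑ i, f (i, i)) +
      2 * ∑ p ∈ univ.filter (fun p : ι × ι => p.1 < p.2), f p := by
  have key : ∀ p : ι × ι, f p =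
      (if p.1 = p.2 then f p else 0) + ((if p.1 < p.2 then f p else 0) +
        (if p.2 < p.1 then f p else 0)) := by
    intro p
    rcases lt_trichotomy p.1 p.2 with h | h | h
    · simp [h, h.ne, h.asymm]
    · simp [h, lt_irrefl]
    · simp [h, h.ne', h.asymm]
  have h0 : ∑ p : ι × ι, f p = ∑ p : ι × ι, ((if p.1 = p.2 then f p else 0) +
      ((if p.1 < p.2 then f p else 0) + (if p.2 < p.1 then f p else 0))) :=
    Finset.sum_congr rfl fun p _ => key p
  have hdiag : ∑ p : ι × ι, (if p.1 = p.2 then f p else 0) = ∑ i, f (i, i) := by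
    rw [Fintype.sum_prod_type]
    simp [Finset.sum_ite_eq]
  have hswap : ∑ p : ι × ι, (if p.2 < p.1 then f p else 0)
      = ∑ p : ι × ι, (if p.1 < p.2 then f p else 0) := by
    apply Fintype.sum_equiv (Equiv.prodComm ι ι)
    rintro ⟨a, b⟩
    simp only [Equiv.prodComm_apply, Prod.swap_prod_mk]
    rw [hf b a]
    rfl
  have hfil : ∑ p : ι × ι, (if p.1 < p.2 then f p else 0)
      = ∑ p ∈ univ.filter (fun p : ι × ι => p.1 < p.2), f p := (Finset.sum_filter _ _).symm
  rw [h0, Finset.sum_add_distrib, Finset.sum_add_distrib, hdiag, hswap, hfil]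
  ring

lemma sum_tau_one {q : ℕ} (a b : Fin q) :
    ∑ τ : Fin q × Fin q, (if a = τ.1 ∧ b = τ.2 then (1:ℝ) else 0) = 1 := by
  rw [Fintype.sum_prod_type]
  have h1 : ∀ x : Fin q, (∑ y : Fin q, if a = x ∧ b = y then (1:ℝ) else 0)
      = if a = x then 1 else 0 := by
    intro x
    by_cases h : a = x
    · simp [h, Finset.sum_ite_eq]
    · simp [h]
  rw [Finset.sum_congr rfl fun x _ => h1 x]
  simp [Finset.sum_ite_eq]

lemma sum_tau_eq {q : ℕ} (a b c d : Fin q) :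
    ∑ τ : Fin q × Fin q, (if (a = τ.1 ∧ b = τ.2) ∧ (c = τ.1 ∧ d = τ.2) then (1:ℝ) else 0)
      = if a = c ∧ b = d then 1 else 0 := by
  by_cases hcd : a = c ∧ b = d
  · obtain ⟨h1, h2⟩ := hcd
    subst h1; subst h2
    rw [if_pos ⟨rfl, rfl⟩]
    simp only [and_self]
    exact sum_tau_one a b
  · rw [if_neg hcd]
    apply Finset.sum_eq_zero
    intro τ _
    rw [if_neg]
    rintro ⟨⟨h1, h2⟩, h3, h4⟩
    exact hcd ⟨h1.trans h3.symm, h2.trans h4.symm⟩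

lemma sum_ell {q : ℕ} (a b : Fin q) :
    ∑ ℓ : Fin q, (if a = ℓ ∧ b = ℓ then (1:ℝ) else 0) = if a = b then 1 else 0 := by
  by_cases h : a = b
  · subst h; simp [and_self, Finset.sum_ite_eq]
  · rw [if_neg h]
    apply Finset.sum_eq_zero
    intro ℓ _
    rw [if_neg]
    rintro ⟨rfl, h2⟩
    exact h h2.symm

/-- Theorem 4 (identity): for a balanced design,
Ave(χ²)(X) = (2/(s(s−1))) ∑_{i<k} β(x_i,x_k)² + a, where
a = (q²ns + n²(1 − s − q)) / (q²(s−1)). -/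
theorem aveChiSq_identity (n s q : ℕ) (hq : 2 ≤ q) (hs : 2 ≤ s)
    (X : Fin n → Fin s → Fin q) (hX : IsBalanced X)
    (a : ℝ) (ha : a = ((q : ℝ) ^ 2 * n * s + (n : ℝ) ^ 2 * (1 - s - q)) /
      ((q : ℝ) ^ 2 * ((s : ℝ) - 1))) :
    aveChiSq X = 2 / ((s : ℝ) * ((s : ℝ) - 1)) *
        ∑ p ∈ pairs n, (coincidence (X p.1) (X p.2) : ℝ) ^ 2 + a := by
  classical
  obtain ⟨hdvd, hbal⟩ := hX
  have hq0 : (q:ℝ) ≠ 0 := Nat.cast_ne_zero.mpr (by omega)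
  have hs0 : (s:ℝ) ≠ 0 := Nat.cast_ne_zero.mpr (by omega)
  have hs2 : (2:ℝ) ≤ (s:ℝ) := by exact_mod_cast hs
  have hs1 : (s:ℝ) - 1 ≠ 0 := by intro h; linarith
  have hB : ∀ i k : Fin n, (coincidence (X i) (X k) : ℝ)
      = ∑ j : Fin s, if X i j = X k j then (1:ℝ) else 0 := by
    intro i k
    simpa [coincidence] using ind_card (fun j => X i j = X k j)
  have hcs : ∀ i k : Fin n, coincidence (X i) (X k) = coincidence (X k) (X i) := by
    intro i k
    unfold coincidence
    congr 1
    apply Finset.filter_congr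
    intro j _
    simp [eq_comm]
  have hdiagc : ∀ i : Fin n, coincidence (X i) (X i) = s := by
    intro i; simp [coincidence]
  -- sum of N over τ is n
  have hNsum : ∀ j l : Fin s,
      ∑ τ : Fin q × Fin q, ((univ.filter fun i => X i j = τ.1 ∧ X i l = τ.2).card : ℝ) = n := by
    intro j l
    calc ∑ τ : Fin q × Fin q, ((univ.filter fun i => X i j = τ.1 ∧ X i l = τ.2).card : ℝ)
        = ∑ τ : Fin q × Fin q, ∑ i : Fin n, (if X i j = τ.1 ∧ X i l = τ.2 then (1:ℝ) else 0) :=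
          Finset.sum_congr rfl fun τ _ => ind_card _
      _ = ∑ i : Fin n, ∑ τ : Fin q × Fin q, (if X i j = τ.1 ∧ X i l = τ.2 then (1:ℝ) else 0) :=
          Finset.sum_comm
      _ = ∑ _i : Fin n, (1:ℝ) := Finset.sum_congr rfl fun i _ => sum_tau_one _ _
      _ = n := by simp
  -- sum of N^2 over τ counts agreeing pairs
  have hNsq : ∀ j l : Fin s,
      ∑ τ : Fin q × Fin q, (((univ.filter fun i => X i j = τ.1 ∧ X i l = τ.2).card : ℝ))^2
        = ∑ pr : Fin n × Fin n,
            (if X pr.1 j = X pr.2 j ∧ X pr.1 l = X pr.2 l then (1:ℝ) else 0) := by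
    intro j l
    calc ∑ τ : Fin q × Fin q, (((univ.filter fun i => X i j = τ.1 ∧ X i l = τ.2).card : ℝ))^2
        = ∑ τ : Fin q × Fin q, ∑ pr : Fin n × Fin n,
            (if (X pr.1 j = τ.1 ∧ X pr.1 l = τ.2) ∧ (X pr.2 j = τ.1 ∧ X pr.2 l = τ.2)
              then (1:ℝ) else 0) :=
          Finset.sum_congr rfl fun τ _ => card_sq _
      _ = ∑ pr : Fin n × Fin n, ∑ τ : Fin q × Fin q,
            (if (X pr.1 j = τ.1 ∧ X pr.1 l = τ.2) ∧ (X pr.2 j = τ.1 ∧ X pr.2 l = τ.2)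
              then (1:ℝ) else 0) := Finset.sum_comm
      _ = _ := Finset.sum_congr rfl fun pr _ => sum_tau_eq _ _ _ _
  -- sum over factor pairs of indicators = (B^2 - B)/2
  have hPair : ∀ i k : Fin n,
      ∑ p ∈ pairs s, (if X i p.1 = X k p.1 ∧ X i p.2 = X k p.2 then (1:ℝ) else 0)
        = ((coincidence (X i) (X k) : ℝ)^2 - (coincidence (X i) (X k) : ℝ))/2 := by
    intro i k
    have h := sum_split
      (fun p : Fin s × Fin s => if X i p.1 = X k p.1 ∧ X i p.2 = X k p.2 then (1:ℝ) else 0)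
      (fun j l => if_congr and_comm rfl rfl)
    have hall : ∑ p : Fin s × Fin s,
        (if X i p.1 = X k p.1 ∧ X i p.2 = X k p.2 then (1:ℝ) else 0)
        = (coincidence (X i) (X k) : ℝ)^2 := (card_sq (fun j => X i j = X k j)).symm
    have hdg : ∑ j : Fin s, (if X i j = X k j ∧ X i j = X k j then (1:ℝ) else 0)
        = (coincidence (X i) (X k) : ℝ) := by
      simp only [and_self]
      exact (hB i k).symm
    rw [hall, hdg] at h
    rw [show pairs s = univ.filter (fun p : Fin s × Fin s => p.1 < p.2) from rfl]
    linarith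
  -- combine
  have hT : ∑ p ∈ pairs s, ∑ τ : Fin q × Fin q,
        (((univ.filter fun i => X i p.1 = τ.1 ∧ X i p.2 = τ.2).card : ℝ))^2
      = ∑ pr : Fin n × Fin n,
          ((coincidence (X pr.1) (X pr.2) : ℝ)^2 - (coincidence (X pr.1) (X pr.2) : ℝ))/2 := by
    calc ∑ p ∈ pairs s, ∑ τ : Fin q × Fin q,
          (((univ.filter fun i => X i p.1 = τ.1 ∧ X i p.2 = τ.2).card : ℝ))^2
        = ∑ p ∈ pairs s, ∑ pr : Fin n × Fin n,
            (if X pr.1 p.1 = X pr.2 p.1 ∧ X pr.1 p.2 = X pr.2 p.2 then (1:ℝ) else 0) :=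
          Finset.sum_congr rfl fun p _ => hNsq p.1 p.2
      _ = ∑ pr : Fin n × Fin n, ∑ p ∈ pairs s,
            (if X pr.1 p.1 = X pr.2 p.1 ∧ X pr.1 p.2 = X pr.2 p.2 then (1:ℝ) else 0) :=
          Finset.sum_comm
      _ = _ := Finset.sum_congr rfl fun pr _ => hPair pr.1 pr.2
  -- evaluate whole-pair sum via split over run pairs
  have hT2 : ∑ pr : Fin n × Fin n,
        ((coincidence (X pr.1) (X pr.2) : ℝ)^2 - (coincidence (X pr.1) (X pr.2) : ℝ))/2
      = (n:ℝ) * (((s:ℝ)^2 - s)/2)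
        + ((∑ p ∈ pairs n, (coincidence (X p.1) (X p.2) : ℝ)^2)
          - ∑ p ∈ pairs n, (coincidence (X p.1) (X p.2) : ℝ)) := by
    have h := sum_split
      (fun pr : Fin n × Fin n =>
        ((coincidence (X pr.1) (X pr.2) : ℝ)^2 - (coincidence (X pr.1) (X pr.2) : ℝ))/2)
      (fun i k => by simp only []; rw [hcs i k])
    have hdg : ∑ i : Fin n,
        ((coincidence (X i) (X i) : ℝ)^2 - (coincidence (X i) (X i) : ℝ))/2
        = (n:ℝ) * (((s:ℝ)^2 - s)/2) := by
      simp only [hdiagc]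
      rw [Finset.sum_const, Finset.card_univ, Fintype.card_fin, nsmul_eq_mul]
    have hhalf : ∑ p ∈ univ.filter (fun p : Fin n × Fin n => p.1 < p.2),
        ((coincidence (X p.1) (X p.2) : ℝ)^2 - (coincidence (X p.1) (X p.2) : ℝ))/2
        = ((∑ p ∈ pairs n, (coincidence (X p.1) (X p.2) : ℝ)^2)
          - ∑ p ∈ pairs n, (coincidence (X p.1) (X p.2) : ℝ))/2 := by
      rw [show pairs n = univ.filter (fun p : Fin n × Fin n => p.1 < p.2) from rfl,
        ← Finset.sum_sub_distrib, ← Finset.sum_div]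
    rw [hdg, hhalf] at h
    linarith
  -- column sums via balance
  have hcol : ∀ j : Fin s, ∑ p ∈ pairs n, (if X p.1 j = X p.2 j then (1:ℝ) else 0)
      = ((n:ℝ)^2/q - n)/2 := by
    intro j
    have h := sum_split (fun p : Fin n × Fin n => if X p.1 j = X p.2 j then (1:ℝ) else 0)
      (fun i k => if_congr eq_comm rfl rfl)
    have hall : ∑ p : Fin n × Fin n, (if X p.1 j = X p.2 j then (1:ℝ) else 0) = (n:ℝ)^2/q := by
      calc ∑ p : Fin n × Fin n, (if X p.1 j = X p.2 j then (1:ℝ) else 0)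
          = ∑ p : Fin n × Fin n, ∑ ℓ : Fin q, (if X p.1 j = ℓ ∧ X p.2 j = ℓ then (1:ℝ) else 0) :=
            Finset.sum_congr rfl fun p _ => (sum_ell _ _).symm
        _ = ∑ ℓ : Fin q, ∑ p : Fin n × Fin n, (if X p.1 j = ℓ ∧ X p.2 j = ℓ then (1:ℝ) else 0) :=
            Finset.sum_comm
        _ = ∑ ℓ : Fin q, ((univ.filter fun i => X i j = ℓ).card : ℝ)^2 :=
            Finset.sum_congr rfl fun ℓ _ => (card_sq (fun i => X i j = ℓ)).symm
        _ = ∑ _ℓ : Fin q, (((n / q : ℕ)) : ℝ)^2 := by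
            refine Finset.sum_congr rfl fun ℓ _ => ?_
            rw [hbal j ℓ]
        _ = (n:ℝ)^2/q := by
            rw [Finset.sum_const, Finset.card_univ, Fintype.card_fin, nsmul_eq_mul,
              Nat.cast_div hdvd hq0]
            field_simp
    have hdg : ∑ i : Fin n, (if X i j = X i j then (1:ℝ) else 0) = n := by simp
    rw [hall, hdg] at h
    rw [show pairs n = univ.filter (fun p : Fin n × Fin n => p.1 < p.2) from rfl]
    linarith
  have hSB : ∑ p ∈ pairs n, (coincidence (X p.1) (X p.2) : ℝ)
      = (s:ℝ) * (((n:ℝ)^2/q - n)/2) := by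
    calc ∑ p ∈ pairs n, (coincidence (X p.1) (X p.2) : ℝ)
        = ∑ p ∈ pairs n, ∑ j : Fin s, (if X p.1 j = X p.2 j then (1:ℝ) else 0) :=
          Finset.sum_congr rfl fun p _ => hB p.1 p.2
      _ = ∑ j : Fin s, ∑ p ∈ pairs n, (if X p.1 j = X p.2 j then (1:ℝ) else 0) := Finset.sum_comm
      _ = ∑ _j : Fin s, ((n:ℝ)^2/q - n)/2 := Finset.sum_congr rfl fun j _ => hcol j
      _ = (s:ℝ) * (((n:ℝ)^2/q - n)/2) := by
          rw [Finset.sum_const, Finset.card_univ, Fintype.card_fin, nsmul_eq_mul]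
  -- card of pairs s
  have hps : (((pairs s).card : ℕ) : ℝ) = ((s:ℝ)^2 - s)/2 := by
    have h := sum_split (fun _ : Fin s × Fin s => (1:ℝ)) (fun _ _ => rfl)
    simp only [Finset.sum_const, Finset.card_univ, Fintype.card_prod, Fintype.card_fin,
      nsmul_eq_mul, mul_one] at h
    rw [show pairs s = univ.filter (fun p : Fin s × Fin s => p.1 < p.2) from rfl]
    push_cast at h ⊢
    nlinarith [h]
  -- expand the squares in aveChiSq
  have hexp : ∀ p : Fin s × Fin s,
      ∑ τ : Fin q × Fin q, (((univ.filter fun i => X i p.1 = τ.1 ∧ X i p.2 = τ.2).card : ℝ)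
          - (n:ℝ)/(q:ℝ)^2)^2
        = (∑ τ : Fin q × Fin q,
            (((univ.filter fun i => X i p.1 = τ.1 ∧ X i p.2 = τ.2).card : ℝ))^2)
          - (n:ℝ)^2/(q:ℝ)^2 := by
    intro p
    have h1 := hNsum p.1 p.2
    have hcardτ : ((Finset.univ : Finset (Fin q × Fin q)).card : ℝ) = (q:ℝ)^2 := by
      simp [sq]
    have hcalc : ∑ τ : Fin q × Fin q,
        (((univ.filter fun i => X i p.1 = τ.1 ∧ X i p.2 = τ.2).card : ℝ) - (n:ℝ)/(q:ℝ)^2)^2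
        = (∑ τ : Fin q × Fin q,
            (((univ.filter fun i => X i p.1 = τ.1 ∧ X i p.2 = τ.2).card : ℝ))^2)
          - 2*((n:ℝ)/(q:ℝ)^2)
            * (∑ τ : Fin q × Fin q,
                ((univ.filter fun i => X i p.1 = τ.1 ∧ X i p.2 = τ.2).card : ℝ))
          + ((Finset.univ : Finset (Fin q × Fin q)).card : ℝ) * ((n:ℝ)/(q:ℝ)^2)^2 := by
      rw [Finset.mul_sum, ← Finset.sum_sub_distrib]
      rw [show (((Finset.univ : Finset (Fin q × Fin q)).card : ℝ) * ((n:ℝ)/(q:ℝ)^2)^2)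
          = ∑ _τ : Fin q × Fin q, ((n:ℝ)/(q:ℝ)^2)^2 by
        rw [Finset.sum_const, nsmul_eq_mul]]
      rw [← Finset.sum_add_distrib]
      exact Finset.sum_congr rfl fun τ _ => by ring
    rw [hcalc, h1, hcardτ]
    have key : -(2*((n:ℝ)/(q:ℝ)^2)*(n:ℝ)) + (q:ℝ)^2*((n:ℝ)/(q:ℝ)^2)^2 = -((n:ℝ)^2/(q:ℝ)^2) := by
      field_simp
      ring
    linarith
  -- final assembly
  unfold aveChiSq
  have hstep : ∑ p ∈ pairs s, ∑ τ : Fin q × Fin q,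
      (((univ.filter fun i => X i p.1 = τ.1 ∧ X i p.2 = τ.2).card : ℝ) - (n:ℝ)/(q:ℝ)^2)^2
      = ∑ p ∈ pairs s, ((∑ τ : Fin q × Fin q,
          (((univ.filter fun i => X i p.1 = τ.1 ∧ X i p.2 = τ.2).card : ℝ))^2)
        - (n:ℝ)^2/(q:ℝ)^2) := Finset.sum_congr rfl fun p _ => hexp p
  rw [hstep, Finset.sum_sub_distrib, Finset.sum_const, nsmul_eq_mul, hT, hT2, hps, hSB, ha]
  field_simp
  ring
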